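/- If a conditional indicator I on an H-decomposable domain is sub-additive, then 1_A·I(X) ≤ I(1_A·X) for all A ∈ H and X in the domain; if moreover I is additive, then I is regular, i.e. I(1_A·X) = 1_A·I(X). -/
import Mathlib


open MeasureTheory Filter Set
open scoped ENNReal Classical

noncomputable section

variable {Ω : Type*}

/-- `S` is the conditional essential supremum of the family `Γ` of extended-real-valued
random variables, given the sub-σ-algebra `m`: `S` is `m`-measurable, a.e. dominates every
member of `Γ`, and is minimal among `m`-measurable a.e. dominants. -/
def IsCondSup {F : MeasurableSpace Ω} (μ : Measure Ω) (m : MeasurableSpace Ω)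
    (Γ : Set (Ω → EReal)) (S : Ω → EReal) : Prop :=
  Measurable[m] S ∧ (∀ Y ∈ Γ, ∀ᵐ ω ∂μ, Y ω ≤ S ω) ∧
    ∀ T : Ω → EReal, Measurable[m] T → (∀ Y ∈ Γ, ∀ᵐ ω ∂μ, Y ω ≤ T ω) →
      ∀ᵐ ω ∂μ, S ω ≤ T ω

/-- `S` is the conditional essential infimum of the family `Γ` given `m`. -/
def IsCondInf {F : MeasurableSpace Ω} (μ : Measure Ω) (m : MeasurableSpace Ω)
    (Γ : Set (Ω → EReal)) (S : Ω → EReal) : Prop :=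
  Measurable[m] S ∧ (∀ Y ∈ Γ, ∀ᵐ ω ∂μ, S ω ≤ Y ω) ∧
    ∀ T : Ω → EReal, Measurable[m] T → (∀ Y ∈ Γ, ∀ᵐ ω ∂μ, T ω ≤ Y ω) →
      ∀ᵐ ω ∂μ, T ω ≤ S ω

/-- If a conditional indicator `I` on an `H`-decomposable domain of real-valued
random variables is sub-additive, then `1_A·I(X) ≤ I(1_A·X)` a.e. for all `A ∈ H`;
if moreover `I` is additive, then `I` is regular: `I(1_A·X) = 1_A·I(X)` a.e. -/
theorem subadditive_indicator_regularity
    {F : MeasurableSpace Ω} (μ : Measure Ω) (H : MeasurableSpace Ω) (hH : H ≤ F)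
    (D : Set (Ω → ℝ)) (h0D : (0 : Ω → ℝ) ∈ D)
    (hDstable : ∀ X ∈ D, ∀ Z : Ω → ℝ, Measurable[H] Z → X + Z ∈ D)
    (hdec : ∀ A : Set Ω, MeasurableSet[H] A → ∀ X ∈ D, ∀ Y ∈ D,
      (fun ω => if ω ∈ A then X ω else Y ω) ∈ D)
    (I : (Ω → ℝ) → Ω → EReal)
    (hmeasI : ∀ X ∈ D, Measurable[H] (I X))
    (hbdd : ∀ X ∈ D, ∃ einf esup : Ω → EReal,
      IsCondInf μ H {fun ω => (X ω : EReal)} einf ∧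
        IsCondSup μ H {fun ω => (X ω : EReal)} esup ∧
        ∀ᵐ ω ∂μ, einf ω ≤ I X ω ∧ I X ω ≤ esup ω)
    (hsub : ∀ X ∈ D, ∀ Y ∈ D, X + Y ∈ D →
      ∀ᵐ ω ∂μ, I (X + Y) ω ≤ I X ω + I Y ω) :
    (∀ X ∈ D, ∀ A : Set Ω, MeasurableSet[H] A →
      ∀ᵐ ω ∂μ, A.indicator (I X) ω ≤ I (A.indicator X) ω) ∧
    ((∀ X ∈ D, ∀ Y ∈ D, X + Y ∈ D →
        I (X + Y) =ᵐ[μ] fun ω => I X ω + I Y ω) →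
      ∀ X ∈ D, ∀ A : Set Ω, MeasurableSet[H] A →
        I (A.indicator X) =ᵐ[μ] A.indicator (I X)) := by
  classical
  have hmem : ∀ A : Set Ω, MeasurableSet[H] A → ∀ X ∈ D, A.indicator X ∈ D := by
    intro A hA X hX
    have h := hdec A hA X hX 0 h0D
    have : A.indicator X = fun ω => if ω ∈ A then X ω else (0 : Ω → ℝ) ω := by
      ext ω; by_cases h' : ω ∈ A <;> simp [Set.indicator_apply, h']
    rw [this]; exact h
  have avg : ∀ A : Set Ω, MeasurableSet[H] A → ∀ X ∈ D,
      ∀ᵐ ω ∂μ, ω ∉ A → I (A.indicator X) ω = 0 := by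
    intro A hA X hX
    obtain ⟨einf, esup, ⟨hinfm, hinfle, hinfmax⟩, ⟨hsupm, hsuple, hsupmin⟩, hI⟩ :=
      hbdd _ (hmem A hA X hX)
    have hTs : Measurable[H] (fun ω => if ω ∈ A then esup ω else (0 : EReal)) :=
      Measurable.ite hA hsupm measurable_const
    have hsle : ∀ᵐ ω ∂μ, esup ω ≤ if ω ∈ A then esup ω else 0 := by
      apply hsupmin _ hTs
      intro Y hY
      rw [Set.mem_singleton_iff] at hY; subst hY
      filter_upwards [hsuple _ (Set.mem_singleton _)] with ω hω
      by_cases h : ω ∈ A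
      · simpa [h] using hω
      · simp [h, Set.indicator_apply]
    have hTi : Measurable[H] (fun ω => if ω ∈ A then einf ω else (0 : EReal)) :=
      Measurable.ite hA hinfm measurable_const
    have hile : ∀ᵐ ω ∂μ, (if ω ∈ A then einf ω else 0) ≤ einf ω := by
      apply hinfmax _ hTi
      intro Y hY
      rw [Set.mem_singleton_iff] at hY; subst hY
      filter_upwards [hinfle _ (Set.mem_singleton _)] with ω hω
      by_cases h : ω ∈ A
      · simpa [h] using hω
      · simp [h, Set.indicator_apply]
    filter_upwards [hsle, hile, hI] with ω h1 h2 h3 hA'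
    have hs0 : esup ω ≤ 0 := by simpa [hA'] using h1
    have hi0 : (0 : EReal) ≤ einf ω := by simpa [hA'] using h2
    exact le_antisymm (h3.2.trans hs0) (hi0.trans h3.1)
  have hsum : ∀ (A : Set Ω) (X : Ω → ℝ), A.indicator X + Aᶜ.indicator X = X := by
    intro A X; ext ω; by_cases h : ω ∈ A <;> simp [h]
  constructor
  · intro X hX A hA
    have hX1 := hmem A hA X hX
    have hX2 := hmem Aᶜ hA.compl X hX
    have hs := hsub _ hX1 _ hX2 (by rw [hsum]; exact hX)
    rw [hsum] at hs
    filter_upwards [hs, avg A hA X hX, avg Aᶜ hA.compl X hX] with ω h1 h2 h3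
    by_cases h : ω ∈ A
    · have h3' : I (Aᶜ.indicator X) ω = 0 := h3 (by simp [h])
      rw [Set.indicator_of_mem h]
      calc I X ω ≤ I (A.indicator X) ω + I (Aᶜ.indicator X) ω := h1
        _ = I (A.indicator X) ω := by rw [h3', add_zero]
    · rw [Set.indicator_of_notMem h, h2 h]
  · intro hadd X hX A hA
    have hX1 := hmem A hA X hX
    have hX2 := hmem Aᶜ hA.compl X hX
    have hs := hadd _ hX1 _ hX2 (by rw [hsum]; exact hX)
    rw [hsum] at hs
    filter_upwards [hs, avg A hA X hX, avg Aᶜ hA.compl X hX] with ω h1 h2 h3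
    by_cases h : ω ∈ A
    · rw [Set.indicator_of_mem h]
      have h3' : I (Aᶜ.indicator X) ω = 0 := h3 (by simp [h])
      calc I (A.indicator X) ω = I (A.indicator X) ω + I (Aᶜ.indicator X) ω := by
            rw [h3', add_zero]
        _ = I X ω := h1.symm
    · rw [Set.indicator_of_notMem h, h2 h]
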